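/- Let X ⪰ 0, R ≻ 0 and S(X) = X − XB(R + BᵀXB)⁻¹BᵀX. Then ker S(X) = ker X; in particular, for any vector v, vᵀS(X)v = 0 implies Xv = 0. -/

import Mathlib

open Matrix

/-- For `X ⪰ 0`, `R ≻ 0`, and `S(X) = X − XB(R + BᵀXB)⁻¹BᵀX`, we have
`ker S(X) = ker X`; in particular `vᵀS(X)v = 0` implies `Xv = 0`. -/
theorem riccati_S_kernel
    {n m : ℕ} (X : Matrix (Fin n) (Fin n) ℝ) (R : Matrix (Fin m) (Fin m) ℝ)
    (B : Matrix (Fin n) (Fin m) ℝ)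
    (hX : X.PosSemidef) (hR : R.PosDef) :
    (∀ v : Fin n → ℝ,
        (X - X * B * (R + Bᵀ * X * B)⁻¹ * Bᵀ * X) *ᵥ v = 0 ↔ X *ᵥ v = 0) ∧
      (∀ v : Fin n → ℝ,
        v ⬝ᵥ ((X - X * B * (R + Bᵀ * X * B)⁻¹ * Bᵀ * X) *ᵥ v) = 0 →
          X *ᵥ v = 0) := by
  set M : Matrix (Fin m) (Fin m) ℝ := R + Bᵀ * X * B with hMdef
  have hXB : (Bᵀ * X * B).PosSemidef := by
    have := hX.conjTranspose_mul_mul_same B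
    simpa using this
  have hM : M.PosDef := hR.add_posSemidef hXB
  have hMinv : M * M⁻¹ = 1 :=
    mul_nonsing_inv _ ((isUnit_iff_isUnit_det _).1 hM.isUnit)
  have hXsym : Xᵀ = X := by
    have := hX.1
    simpa using this.eq
  -- the quadratic-form statement
  have key : ∀ v : Fin n → ℝ,
      v ⬝ᵥ ((X - X * B * M⁻¹ * Bᵀ * X) *ᵥ v) = 0 → X *ᵥ v = 0 := by
    intro v hv
    set a : Fin n → ℝ := X *ᵥ v with ha
    set u : Fin m → ℝ := M⁻¹ *ᵥ (Bᵀ *ᵥ a) with hu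
    set c : Fin n → ℝ := B *ᵥ u with hc
    have hMu : M *ᵥ u = Bᵀ *ᵥ a := by
      rw [hu, mulVec_mulVec, hMinv, one_mulVec]
    -- S v = a - X c
    have hSv : (X - X * B * M⁻¹ * Bᵀ * X) *ᵥ v = a - X *ᵥ c := by
      rw [sub_mulVec]
      congr 1
      simp [hc, hu, ha, mulVec_mulVec, Matrix.mul_assoc]
    -- dot product identities
    have f1 : v ⬝ᵥ (X *ᵥ c) = a ⬝ᵥ c := by
      rw [dotProduct_mulVec, ← mulVec_transpose, hXsym, ← ha]
    have f3 : a ⬝ᵥ c = (Bᵀ *ᵥ a) ⬝ᵥ u := by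
      rw [hc, dotProduct_mulVec, ← mulVec_transpose]
    have f4 : c ⬝ᵥ (X *ᵥ c) + u ⬝ᵥ (R *ᵥ u) = u ⬝ᵥ (Bᵀ *ᵥ a) := by
      have h1 : u ⬝ᵥ (M *ᵥ u) = u ⬝ᵥ (R *ᵥ u) + u ⬝ᵥ ((Bᵀ * X * B) *ᵥ u) := by
        rw [hMdef, add_mulVec, dotProduct_add]
      have h2 : u ⬝ᵥ ((Bᵀ * X * B) *ᵥ u) = c ⬝ᵥ (X *ᵥ c) := by
        rw [hc, ← mulVec_mulVec, ← mulVec_mulVec, dotProduct_mulVec,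
          ← mulVec_transpose, transpose_transpose]
      rw [← hMu, h1, h2]; ring
    -- the decomposition of the quadratic form
    have decomp : v ⬝ᵥ ((X - X * B * M⁻¹ * Bᵀ * X) *ᵥ v)
        = (v - c) ⬝ᵥ (X *ᵥ (v - c)) + u ⬝ᵥ (R *ᵥ u) := by
      have fc : c ⬝ᵥ a = a ⬝ᵥ c := dotProduct_comm _ _
      have fb : u ⬝ᵥ (Bᵀ *ᵥ a) = (Bᵀ *ᵥ a) ⬝ᵥ u := dotProduct_comm _ _
      rw [hSv]
      simp only [mulVec_sub, sub_dotProduct, dotProduct_sub, ← ha]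
      linarith [f1, f3, f4, fc, fb]
    rw [decomp] at hv
    have hnn1 : 0 ≤ (v - c) ⬝ᵥ (X *ᵥ (v - c)) := by
      have := hX.dotProduct_mulVec_nonneg (v - c); simpa using this
    have hnn2 : 0 ≤ u ⬝ᵥ (R *ᵥ u) := by
      have := hR.posSemidef.dotProduct_mulVec_nonneg u; simpa using this
    have hu0 : u = 0 := by
      by_contra h
      have := hR.dotProduct_mulVec_pos h
      simp only [RCLike.star_def, star_trivial] at this
      have : (0:ℝ) < u ⬝ᵥ (R *ᵥ u) := by simpa using this
      linarith
    have hc0 : c = 0 := by rw [hc, hu0, mulVec_zero]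
    have hq : (v - c) ⬝ᵥ (X *ᵥ (v - c)) = 0 := by linarith
    rw [hc0, sub_zero] at hq
    have := (hX.dotProduct_mulVec_zero_iff v).1 (by simpa using hq)
    exact this
  refine ⟨fun v => ?_, key⟩
  constructor
  · intro h
    exact key v (by rw [h, dotProduct_zero])
  · intro h
    rw [sub_mulVec, ← mulVec_mulVec, h]
    simp
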